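/- Let k ≥ 1, let d ≤ k, and set n = ⌈(k+1)/d⌉. For any distinct a₁, …, aₙ ∈ ℂ, the polynomials (x + aₗ)^{k-i} for 1 ≤ ℓ ≤ n and 0 ≤ i < d span ℂ[x]_{≤k}. -/
import Mathlib

open Polynomial Finset

lemma aux_desc (k j m : ℕ) :
    k.choose j * (k - j).descFactorial m = k.descFactorial m * (k - m).choose j := by
  apply Nat.eq_of_mul_eq_mul_left (Nat.factorial_pos j)
  have h1 : (k - j).descFactorial m * k.descFactorial j = k.descFactorial (j + m) := by
    have := Nat.descFactorial_mul_descFactorial (n := k) (k := j) (m := j + m)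
      (Nat.le_add_right j m)
    simpa using this
  have h2 : (k - m).descFactorial j * k.descFactorial m = k.descFactorial (m + j) := by
    have := Nat.descFactorial_mul_descFactorial (n := k) (k := m) (m := m + j)
      (Nat.le_add_right m j)
    simpa using this
  calc j.factorial * (k.choose j * (k - j).descFactorial m)
      = (j.factorial * k.choose j) * (k - j).descFactorial m := by ring
    _ = k.descFactorial j * (k - j).descFactorial m := by
        rw [← Nat.descFactorial_eq_factorial_mul_choose]
    _ = k.descFactorial (j + m) := by rw [mul_comm]; exact h1
    _ = k.descFactorial (m + j) := by rw [Nat.add_comm]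
    _ = (k - m).descFactorial j * k.descFactorial m := h2.symm
    _ = (j.factorial * (k - m).choose j) * k.descFactorial m := by
        rw [← Nat.descFactorial_eq_factorial_mul_choose]
    _ = j.factorial * (k.descFactorial m * (k - m).choose j) := by ring

-- f applied to (X + C t)^N
lemma aux_f (f : Module.Dual ℂ (Polynomial ℂ)) (t : ℂ) (N k : ℕ) (hN : N ≤ k) :
    f ((X + C t) ^ N) =
      ∑ j ∈ range (k + 1), t ^ (N - j) * (N.choose j : ℂ) * f (X ^ j) := by
  have hexp : (X + C t) ^ N =
      ∑ j ∈ range (N + 1), (t ^ (N - j) * (N.choose j : ℂ)) • X ^ j := by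
    rw [add_pow]
    refine Finset.sum_congr rfl fun j hj => ?_
    rw [smul_eq_C_mul, ← C_pow, map_mul, map_natCast]
    ring
  rw [hexp, map_sum]
  simp_rw [map_smul, smul_eq_mul]
  apply Finset.sum_subset
  · exact Finset.range_subset_range.2 (by omega)
  · intro j _ hj
    rw [Finset.mem_range, not_lt] at hj
    rw [Nat.choose_eq_zero_of_lt (by omega)]
    simp

theorem stmt_1 (k d : ℕ) (hk : 1 ≤ k) (hd1 : 1 ≤ d) (hd : d ≤ k)
    (a : Fin ((k + d) / d) → ℂ) (ha : Function.Injective a) :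
    Submodule.span ℂ
      {q : Polynomial ℂ | ∃ (ℓ : Fin ((k + d) / d)) (i : ℕ), i < d ∧
        q = (X + C (a ℓ)) ^ (k - i)} =
      Polynomial.degreeLE ℂ k := by
  set S : Set (Polynomial ℂ) := {q : Polynomial ℂ | ∃ (ℓ : Fin ((k + d) / d)) (i : ℕ), i < d ∧
        q = (X + C (a ℓ)) ^ (k - i)} with hS
  set M := Submodule.span ℂ S with hM
  apply le_antisymm
  · rw [Submodule.span_le]
    rintro q ⟨ℓ, i, hi, rfl⟩
    rw [SetLike.mem_coe, Polynomial.mem_degreeLE]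
    calc degree ((X + C (a ℓ)) ^ (k - i)) ≤ (k - i) • degree (X + C (a ℓ)) :=
          degree_pow_le _ _
      _ = ((k - i : ℕ) : WithBot ℕ) := by rw [degree_X_add_C]; simp
      _ ≤ (k : WithBot ℕ) := by exact_mod_cast Nat.cast_le.2 (Nat.sub_le k i)
  · intro p hp
    by_contra hpM
    obtain ⟨f, hf0, hfmap⟩ := Submodule.exists_dual_map_eq_bot_of_notMem hpM inferInstance
    have hfvan : ∀ q ∈ S, f q = 0 := by
      intro q hq
      have : f q ∈ Submodule.map f M := Submodule.mem_map_of_mem (Submodule.subset_span hq)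
      rw [hfmap] at this
      simpa using this
    set c : ℕ → ℂ := fun j => f (X ^ j) with hc
    set Q : Polynomial ℂ := ∑ j ∈ range (k + 1), C (c j * (k.choose j : ℂ)) * X ^ (k - j)
      with hQ
    -- derivatives of Q vanish at each a ℓ
    have hder : ∀ (ℓ : Fin ((k + d) / d)) (m : ℕ), m < d →
        (derivative^[m] Q).IsRoot (a ℓ) := by
      intro ℓ m hm
      have hQm : derivative^[m] Q = ∑ j ∈ range (k + 1),
          C (c j * (k.choose j : ℂ)) * (C (((k - j).descFactorial m : ℂ)) * X ^ (k - j - m)) := by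
        rw [hQ, iterate_derivative_sum]
        refine Finset.sum_congr rfl fun j hj => ?_
        rw [iterate_derivative_C_mul, iterate_derivative_X_pow_eq_C_mul]
      have hvan : f ((X + C (a ℓ)) ^ (k - m)) = 0 :=
        hfvan _ ⟨ℓ, m, hm, rfl⟩
      rw [aux_f f (a ℓ) (k - m) k (Nat.sub_le _ _)] at hvan
      unfold IsRoot
      rw [hQm, eval_finset_sum]
      simp only [eval_mul, eval_C, eval_pow, eval_X]
      calc ∑ j ∈ range (k + 1),
            c j * (k.choose j : ℂ) * (((k - j).descFactorial m : ℂ) * a ℓ ^ (k - j - m))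
          = (k.descFactorial m : ℂ) * ∑ j ∈ range (k + 1),
              (a ℓ) ^ (k - m - j) * ((k - m).choose j : ℂ) * c j := by
            rw [Finset.mul_sum]
            refine Finset.sum_congr rfl fun j hj => ?_
            have hid := aux_desc k j m
            have : ((k.choose j : ℂ)) * (((k - j).descFactorial m : ℂ)) =
                ((k.descFactorial m : ℂ)) * (((k - m).choose j : ℂ)) := by
              exact_mod_cast congrArg (fun x : ℕ => (x : ℂ)) hid
            have hsub : k - j - m = k - m - j := by omega
            rw [hsub]
            calc c j * (k.choose j : ℂ) * (((k - j).descFactorial m : ℂ) * a ℓ ^ (k - m - j))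
                = ((k.choose j : ℂ) * ((k - j).descFactorial m : ℂ)) * (c j * a ℓ ^ (k - m - j)) := by
                  ring
              _ = ((k.descFactorial m : ℂ) * ((k - m).choose j : ℂ)) * (c j * a ℓ ^ (k - m - j)) := by
                  rw [this]
              _ = (k.descFactorial m : ℂ) * (a ℓ ^ (k - m - j) * ((k - m).choose j : ℂ) * c j) := by
                  ring
        _ = 0 := by rw [hvan, mul_zero]
    -- Q = 0
    have hQ0 : Q = 0 := by
      by_contra hQne
      have hmult : ∀ ℓ : Fin ((k + d) / d), d ≤ Q.rootMultiplicity (a ℓ) := by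
        intro ℓ
        have : d - 1 < Q.rootMultiplicity (a ℓ) :=
          lt_rootMultiplicity_of_isRoot_iterate_derivative hQne
            (fun m hm => hder ℓ m (by omega))
        omega
      have hcount : ∀ ℓ : Fin ((k + d) / d), d ≤ Q.roots.count (a ℓ) := by
        intro ℓ
        rw [count_roots]
        exact hmult ℓ
      have hsum : ((k + d) / d) * d ≤ Multiset.card Q.roots := by
        calc ((k + d) / d) * d = ∑ ℓ : Fin ((k + d) / d), d := by
              simp [Finset.sum_const, Finset.card_univ]
          _ ≤ ∑ ℓ : Fin ((k + d) / d), Q.roots.count (a ℓ) :=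
              Finset.sum_le_sum fun ℓ _ => hcount ℓ
          _ = ∑ x ∈ Finset.univ.image a, Q.roots.count x :=
              by rw [Finset.sum_image (fun x _ y _ h => ha h)]
          _ ≤ Multiset.card Q.roots := by
              classical
              calc ∑ x ∈ Finset.univ.image a, Q.roots.count x
                  = ∑ x ∈ (Finset.univ.image a) ∩ Q.roots.toFinset, Q.roots.count x := by
                    refine (Finset.sum_subset (Finset.inter_subset_left) ?_).symm
                    intro x hx hx'
                    rw [Multiset.count_eq_zero]
                    intro hmem
                    exact hx' (Finset.mem_inter.2 ⟨hx, Multiset.mem_toFinset.2 hmem⟩)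
                _ ≤ ∑ x ∈ Q.roots.toFinset, Q.roots.count x :=
                    Finset.sum_le_sum_of_subset (Finset.inter_subset_right)
                _ = Multiset.card Q.roots := Multiset.toFinset_sum_count_eq _
      have hdeg : Q.natDegree ≤ k := by
        apply natDegree_sum_le_of_forall_le
        intro j hj
        calc (C (c j * (k.choose j : ℂ)) * X ^ (k - j)).natDegree ≤ 0 + (k - j) := by
              apply natDegree_mul_le.trans
              gcongr
              · exact (natDegree_C _).le
              · exact (natDegree_X_pow_le _)
          _ ≤ k := by omega
      have hcard := Q.card_roots'
      have hnd : k + 1 ≤ ((k + d) / d) * d := by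
        rw [Nat.mul_comm]
        have h1 := Nat.div_add_mod (k + d) d
        have h2 : (k + d) % d < d := Nat.mod_lt _ (by omega)
        omega
      have := hnd.trans (hsum.trans (hcard.trans hdeg))
      omega
    -- c j = 0 for j ≤ k
    have hcz : ∀ j ≤ k, c j = 0 := by
      intro j hj
      have := congrArg (fun q => Polynomial.coeff q (k - j)) hQ0
      simp only [coeff_zero] at this
      rw [hQ, finset_sum_coeff] at this
      simp only [coeff_C_mul, coeff_X_pow] at this
      rw [Finset.sum_eq_single j] at this
      · rw [if_pos rfl, mul_one] at this
        have hch : ((k.choose j : ℂ)) ≠ 0 := Nat.cast_ne_zero.2 (Nat.choose_pos hj).ne'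
        exact (mul_eq_zero.1 this).resolve_right hch
      · intro j' hj' hne
        rw [Finset.mem_range] at hj'
        rw [if_neg (by omega), mul_zero]
      · intro hjmem
        exact absurd (Finset.mem_range.2 (by omega)) hjmem
    -- conclude f p = 0
    apply hf0
    rw [Polynomial.mem_degreeLE] at hp
    have hnd : p.natDegree < k + 1 := by
      have := Polynomial.natDegree_le_iff_degree_le.2 hp
      omega
    have hps : p = ∑ j ∈ range (k + 1), (monomial j) (p.coeff j) := p.as_sum_range' _ hnd
    rw [hps, map_sum]
    refine Finset.sum_eq_zero fun j hj => ?_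
    rw [Finset.mem_range] at hj
    rw [← C_mul_X_pow_eq_monomial, ← smul_eq_C_mul, map_smul, smul_eq_mul]
    have hz := hcz j (by omega)
    simp only [hc] at hz
    rw [hz, mul_zero]
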